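/- In dimension d ≥ 3 with Ω = ℝ^d \ closure(B_R) and φ(x) = 1 − (|x|/R)^{2−d}, the function F_τ(y) = K_τ φ(e^τ y)² G(y) on Ω_τ = e^{−τ}Ω, written radially as e^{−Φ(r)} up to a constant with Φ(r) = r²/2 − 2 log φ_τ(r) − (d−1) log r where φ_τ(r) = 1 − (e^τ r / R)^{2−d}, satisfies Φ''(r) ≥ 1/2 for all r > R e^{−τ} when d ≥ 3 (more precisely, r ↦ −2 log φ_τ(r) − (d−1) log r is convex plus the r²/2 term gives Φ'' ≥ 1). -/

import Mathlib

open Real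

/-- Derivative of `s ↦ (c*s)^p`. -/
lemma hasDerivAt_cs (c p : ℝ) {r : ℝ} (h : c * r ≠ 0) :
    HasDerivAt (fun s : ℝ => (c * s) ^ p) (p * c * (c * r) ^ (p - 1)) r := by
  have h1 : HasDerivAt (fun s : ℝ => c * s) c r := by
    simpa using (hasDerivAt_id r).const_mul c
  have h2 := (Real.hasDerivAt_rpow_const (x := c * r) (p := p) (Or.inl h)).comp r h1
  refine h2.congr_deriv ?_
  ring

lemma one_lt_pos {c r : ℝ} (hr : 1 < c * r) : (0:ℝ) < c * r := lt_trans one_pos hr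

lemma denom_pos {c p r : ℝ} (hr : 1 < c * r) (hp : p < 0) : 0 < 1 - (c * r) ^ p := by
  have := Real.rpow_lt_one_of_one_lt_of_neg hr hp
  linarith

/-- Derivative of `s ↦ log (1 - (c*s)^p)`. -/
lemma hasDerivAt_logterm (c p : ℝ) {r : ℝ} (hr : 1 < c * r) (hp : p < 0) :
    HasDerivAt (fun s : ℝ => Real.log (1 - (c * s) ^ p))
      (-(p * c * (c * r) ^ (p - 1)) / (1 - (c * r) ^ p)) r := by
  have hx : (0:ℝ) < c * r := one_lt_pos hr
  have hne : 1 - (c * r) ^ p ≠ 0 := (denom_pos hr hp).ne'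
  have h1 : HasDerivAt (fun s : ℝ => 1 - (c * s) ^ p) (-(p * c * (c * r) ^ (p - 1))) r :=
    (hasDerivAt_cs c p hx.ne').const_sub 1
  exact h1.log hne

/-- Derivative of the first-derivative of the log term (quotient rule). -/
lemma hasDerivAt_logterm' (c p : ℝ) {r : ℝ} (hr : 1 < c * r) (hp : p < 0) :
    HasDerivAt (fun s : ℝ => -(p * c * (c * s) ^ (p - 1)) / (1 - (c * s) ^ p))
      ((-(p * c * ((p - 1) * c * (c * r) ^ (p - 2))) * (1 - (c * r) ^ p)
          - -(p * c * (c * r) ^ (p - 1)) * -(p * c * (c * r) ^ (p - 1)))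
        / (1 - (c * r) ^ p) ^ 2) r := by
  have hx : (0:ℝ) < c * r := one_lt_pos hr
  have hne : 1 - (c * r) ^ p ≠ 0 := (denom_pos hr hp).ne'
  have hN : HasDerivAt (fun s : ℝ => -(p * c * (c * s) ^ (p - 1)))
      (-(p * c * ((p - 1) * c * (c * r) ^ (p - 2)))) r := by
    have := ((hasDerivAt_cs c (p - 1) hx.ne').const_mul (p * c)).neg
    refine this.congr_deriv ?_
    rw [show p - 2 = p - 1 - 1 by ring]
  have hM : HasDerivAt (fun s : ℝ => 1 - (c * s) ^ p) (-(p * c * (c * r) ^ (p - 1))) r :=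
    (hasDerivAt_cs c p hx.ne').const_sub 1
  exact hN.div hM hne

/-- The second derivative of the log term is nonpositive (concavity). -/
lemma logterm''_nonpos (c p : ℝ) {r : ℝ} (hr : 1 < c * r) (hp : p ≤ -1) :
    (-(p * c * ((p - 1) * c * (c * r) ^ (p - 2))) * (1 - (c * r) ^ p)
        - -(p * c * (c * r) ^ (p - 1)) * -(p * c * (c * r) ^ (p - 1)))
      / (1 - (c * r) ^ p) ^ 2 ≤ 0 := by
  have hp0 : p < 0 := lt_of_le_of_lt hp (by norm_num)
  have hx : (0:ℝ) < c * r := one_lt_pos hr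
  have hA : 0 < 1 - (c * r) ^ p := denom_pos hr hp0
  have h2 : (0:ℝ) < (c * r) ^ (p - 2) := Real.rpow_pos_of_pos hx _
  have hpp : 0 ≤ p * (p - 1) := by nlinarith
  apply div_nonpos_of_nonpos_of_nonneg _ (sq_nonneg _)
  nlinarith [sq_nonneg (p * c * (c * r) ^ (p - 1)), mul_nonneg (mul_nonneg hpp (sq_nonneg c)) (mul_nonneg h2.le hA.le)]

section
variable (c p k : ℝ)

/-- First derivative of the full radial potential. -/
lemma hasDerivAt_Phi {r : ℝ} (hr : 1 < c * r) (hp : p < 0) (hr0 : 0 < r) :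
    HasDerivAt (fun s : ℝ => s ^ 2 / 2 - 2 * Real.log (1 - (c * s) ^ p) - k * Real.log s)
      (r - 2 * (-(p * c * (c * r) ^ (p - 1)) / (1 - (c * r) ^ p)) - k * r⁻¹) r := by
  have h1 : HasDerivAt (fun s : ℝ => s ^ 2 / 2) r r := by
    have := (hasDerivAt_pow 2 r).div_const 2
    refine this.congr_deriv ?_
    norm_num
  have h2 := (hasDerivAt_logterm c p hr hp).const_mul 2
  have h3 := (Real.hasDerivAt_log hr0.ne').const_mul k
  exact (h1.sub h2).sub h3

end

/-- Uniform convexity of the radial potential of the transient equilibrium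
outside a ball in dimension `d ≥ 3`: the map `s ↦ log(1 - s^{2-d})` is concave
on `(1,∞)`, and the potential
`Φ(r) = r²/2 − 2 log(1 − (e^τ r/R)^{2-d}) − (d−1) log r` has `Φ'' ≥ 1` on
`(R e^{-τ}, ∞)`. -/
theorem stmt_15 (d : ℕ) (hd : 3 ≤ d) (R τ : ℝ) (hR : 0 < R) :
    ConcaveOn ℝ (Set.Ioi (1:ℝ)) (fun s : ℝ => Real.log (1 - s ^ ((2:ℝ) - d))) ∧
    ∀ r : ℝ, R * Real.exp (-τ) < r →
      1 ≤ deriv (deriv (fun r : ℝ =>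
            r ^ 2 / 2 - 2 * Real.log (1 - (Real.exp τ * r / R) ^ ((2:ℝ) - d))
              - ((d : ℝ) - 1) * Real.log r)) r := by
  set p : ℝ := (2:ℝ) - d with hpdef
  have hd3 : (3:ℝ) ≤ (d:ℝ) := by exact_mod_cast hd
  have hp : p ≤ -1 := by simp only [hpdef]; linarith
  have hp0 : p < 0 := lt_of_le_of_lt hp (by norm_num)
  constructor
  · -- concavity part
    have hfun : (fun s : ℝ => Real.log (1 - s ^ p))
        = (fun s : ℝ => Real.log (1 - ((1:ℝ) * s) ^ p)) := by
      funext s; rw [one_mul]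
    rw [hfun]
    refine concaveOn_of_hasDerivWithinAt2_nonpos (convex_Ioi 1)
      (f' := fun s => -(p * 1 * ((1:ℝ) * s) ^ (p - 1)) / (1 - ((1:ℝ) * s) ^ p))
      (f'' := fun s => (-(p * 1 * ((p - 1) * 1 * ((1:ℝ) * s) ^ (p - 2))) * (1 - ((1:ℝ) * s) ^ p)
          - -(p * 1 * ((1:ℝ) * s) ^ (p - 1)) * -(p * 1 * ((1:ℝ) * s) ^ (p - 1)))
        / (1 - ((1:ℝ) * s) ^ p) ^ 2)
      ?_ ?_ ?_ ?_
    · intro x hx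
      have hx' : 1 < (1:ℝ) * x := by simpa using hx
      exact (hasDerivAt_logterm 1 p hx' hp0).continuousAt.continuousWithinAt
    · intro x hx
      rw [interior_Ioi] at hx
      have hx' : 1 < (1:ℝ) * x := by simpa using hx
      exact (hasDerivAt_logterm 1 p hx' hp0).hasDerivWithinAt
    · intro x hx
      rw [interior_Ioi] at hx
      have hx' : 1 < (1:ℝ) * x := by simpa using hx
      exact (hasDerivAt_logterm' 1 p hx' hp0).hasDerivWithinAt
    · intro x hx
      rw [interior_Ioi] at hx
      have hx' : 1 < (1:ℝ) * x := by simpa using hx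
      exact logterm''_nonpos 1 p hx' hp
  · -- second-derivative bound
    intro r hrr
    set c : ℝ := Real.exp τ / R with hcdef
    set k : ℝ := (d:ℝ) - 1 with hkdef
    have hc : 0 < c := div_pos (Real.exp_pos τ) hR
    have hr0 : 0 < r := lt_trans (by positivity) hrr
    have hcr : 1 < c * r := by
      have h1 : c * (R * Real.exp (-τ)) = 1 := by
        rw [hcdef, Real.exp_neg]
        field_simp
      calc (1:ℝ) = c * (R * Real.exp (-τ)) := h1.symm
        _ < c * r := by exact mul_lt_mul_of_pos_left hrr hc
    have hfeq : (fun r : ℝ => r ^ 2 / 2 - 2 * Real.log (1 - (Real.exp τ * r / R) ^ p)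
          - k * Real.log r)
        = (fun s : ℝ => s ^ 2 / 2 - 2 * Real.log (1 - (c * s) ^ p) - k * Real.log s) := by
      funext s
      rw [show Real.exp τ * s / R = c * s from by rw [hcdef]; ring]
    rw [hfeq]
    -- identify the first derivative on the open set {s | 1 < c * s}
    have hS : IsOpen {s : ℝ | 1 < c * s} :=
      isOpen_lt continuous_const (continuous_const.mul continuous_id)
    have hev : deriv (fun s : ℝ => s ^ 2 / 2 - 2 * Real.log (1 - (c * s) ^ p) - k * Real.log s)
        =ᶠ[nhds r] (fun s : ℝ =>
          s - 2 * (-(p * c * (c * s) ^ (p - 1)) / (1 - (c * s) ^ p)) - k * s⁻¹) := by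
      refine Filter.eventuallyEq_of_mem (hS.mem_nhds hcr) (fun s hs => ?_)
      have hs1 : 1 < c * s := hs
      have hs0 : 0 < s := by nlinarith [one_lt_pos hs1, hc.le]
      exact (hasDerivAt_Phi c p k hs1 hp0 hs0).deriv
    rw [hev.deriv_eq]
    have hF : HasDerivAt (fun s : ℝ =>
          s - 2 * (-(p * c * (c * s) ^ (p - 1)) / (1 - (c * s) ^ p)) - k * s⁻¹)
        (1 - 2 * ((-(p * c * ((p - 1) * c * (c * r) ^ (p - 2))) * (1 - (c * r) ^ p)
            - -(p * c * (c * r) ^ (p - 1)) * -(p * c * (c * r) ^ (p - 1)))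
          / (1 - (c * r) ^ p) ^ 2) - k * (-(r ^ 2)⁻¹)) r :=
      ((hasDerivAt_id r).sub ((hasDerivAt_logterm' c p hcr hp0).const_mul 2)).sub
        ((hasDerivAt_inv hr0.ne').const_mul k)
    rw [hF.deriv]
    have hQ := logterm''_nonpos c p hcr hp
    have hk : 0 ≤ k := by rw [hkdef]; linarith
    have hr2 : 0 < ((r:ℝ) ^ 2)⁻¹ := by positivity
    nlinarith [mul_nonneg hk hr2.le]
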